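/- arXiv:1112.1371 — 3 statements merged into one kernel-verified Lean document; each statement's English description precedes it below -/
import Mathlib

section
/- Let f be a homogeneous polynomial of degree kd + k - 1 in two variables over ℂ, where k ≥ 2, d ≥ 0. If for each k-th root of unity ξ, all partial derivatives of f of order ≤ d vanish at the point (1, ξ), then f is identically zero. -/
open MvPolynomial



private lemma evalPoly_aeval (v : Fin 2 → Polynomial ℂ) (t : ℂ) (q : MvPolynomial (Fin 2) ℂ) :
    Polynomial.eval t (MvPolynomial.aeval v q) =
      MvPolynomial.eval (fun i => Polynomial.eval t (v i)) q := by
  induction q using MvPolynomial.induction_on with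
  | C a => simp [MvPolynomial.algebraMap_eq]
  | add p q hp hq => simp [hp, hq]
  | mul_X p i hp => simp [hp]

private lemma aeval_pderiv_one (q : MvPolynomial (Fin 2) ℂ) :
    MvPolynomial.aeval (![1, Polynomial.X] : Fin 2 → Polynomial ℂ) (pderiv (1 : Fin 2) q) =
      Polynomial.derivative
        (MvPolynomial.aeval (![1, Polynomial.X] : Fin 2 → Polynomial ℂ) q) := by
  induction q using MvPolynomial.induction_on with
  | C a => simp
  | add p q hp hq => simp [hp, hq]
  | mul_X p i hp =>
    fin_cases i <;>
      simp [pderiv_mul, hp, pderiv_X_self, pderiv_X_of_ne, Polynomial.derivative_mul] <;> ring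

private lemma foldr_replicate' {N : ℕ} (f : MvPolynomial (Fin N) ℂ) (i : Fin N) (m : ℕ) :
    (List.replicate m i).foldr (fun j g => pderiv j g) f = (⇑(pderiv i))^[m] f := by
  induction m with
  | zero => rfl
  | succ m ih =>
    rw [List.replicate_succ, List.foldr_cons, ih]
    exact (Function.iterate_succ_apply' (⇑(pderiv i)) m f).symm

private lemma support_degree_eq {n : ℕ} {f : MvPolynomial (Fin 2) ℂ}
    (hf : f.IsHomogeneous n) {m : Fin 2 →₀ ℕ} (hm : m ∈ f.support) :
    ∑ i ∈ m.support, m i = n := by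
  have := hf (MvPolynomial.mem_support_iff.1 hm)
  simpa [Finsupp.weight_apply, Finsupp.sum] using this

private lemma natDegree_dehom_le {n : ℕ} (f : MvPolynomial (Fin 2) ℂ)
    (hf : f.IsHomogeneous n) :
    (MvPolynomial.aeval (![1, Polynomial.X] : Fin 2 → Polynomial ℂ) f).natDegree ≤ n := by
  rw [← MvPolynomial.support_sum_monomial_coeff f, map_sum]
  apply Polynomial.natDegree_sum_le_of_forall_le
  intro m hm
  rw [MvPolynomial.aeval_monomial]
  refine le_trans (Polynomial.natDegree_mul_le) ?_
  rw [Polynomial.algebraMap_eq, Polynomial.natDegree_C, zero_add]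
  rw [Finsupp.prod]
  refine le_trans (Polynomial.natDegree_prod_le _ _) ?_
  rw [← support_degree_eq hf hm]
  apply Finset.sum_le_sum
  intro i _
  rw [Polynomial.natDegree_pow]
  have : ((![1, Polynomial.X] : Fin 2 → Polynomial ℂ) i).natDegree ≤ 1 := by
    fin_cases i <;> simp
  calc m i * ((![1, Polynomial.X] : Fin 2 → Polynomial ℂ) i).natDegree ≤ m i * 1 :=
        Nat.mul_le_mul_left _ this
    _ = m i := Nat.mul_one _

private lemma homog_eval_smul {n : ℕ} {f : MvPolynomial (Fin 2) ℂ}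
    (hf : f.IsHomogeneous n) (c : ℂ) (x : Fin 2 → ℂ) :
    MvPolynomial.eval (fun i => c * x i) f = c ^ n * MvPolynomial.eval x f := by
  rw [MvPolynomial.eval_eq, MvPolynomial.eval_eq, Finset.mul_sum]
  apply Finset.sum_congr rfl
  intro m hm
  rw [← support_degree_eq hf hm]
  simp_rw [mul_pow, Finset.prod_mul_distrib, Finset.prod_pow_eq_pow_sum]
  ring

/-- All partial derivatives of `f` of total order `≤ d` vanish at the point `p`. -/
def derivsVanish {N : ℕ} (f : MvPolynomial (Fin N) ℂ) (d : ℕ) (p : Fin N → ℂ) : Prop :=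
  ∀ L : List (Fin N), L.length ≤ d →
    MvPolynomial.eval p (L.foldr (fun i g => MvPolynomial.pderiv i g) f) = 0

/-- Let `f` be a homogeneous polynomial of degree `kd + k - 1` in two variables over `ℂ`,
with `k ≥ 2`, `d ≥ 0`. If for each `k`-th root of unity `ξ` all partial derivatives of `f`
of order `≤ d` vanish at `(1, ξ)`, then `f = 0`. -/
theorem binary_form_vanishing_at_roots_of_unity (k d : ℕ) (hk : 2 ≤ k)
    (f : MvPolynomial (Fin 2) ℂ) (hf : f.IsHomogeneous (k * d + k - 1))
    (h : ∀ ξ : ℂ, ξ ^ k = 1 → derivsVanish f d ![1, ξ]) :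
    f = 0 := by
  have hk1 : 0 < k := by omega
  set g : Polynomial ℂ :=
    MvPolynomial.aeval (![1, Polynomial.X] : Fin 2 → Polynomial ℂ) f with hg
  have hiter : ∀ m : ℕ, MvPolynomial.aeval (![1, Polynomial.X] : Fin 2 → Polynomial ℂ)
      ((⇑(pderiv (1 : Fin 2)))^[m] f) = Polynomial.derivative^[m] g := by
    intro m; induction m with
    | zero => rfl
    | succ m ih =>
      rw [Function.iterate_succ_apply', Function.iterate_succ_apply', aeval_pderiv_one, ih]
  have hg0 : g = 0 := by
    by_contra hgne
    have hmult : ∀ ξ : ℂ, ξ ^ k = 1 → d < g.rootMultiplicity ξ := by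
      intro ξ hξ
      apply Polynomial.lt_rootMultiplicity_of_isRoot_iterate_derivative hgne
      intro m hm
      have hv := h ξ hξ (List.replicate m 1) (by simpa using hm)
      rw [foldr_replicate'] at hv
      have he := evalPoly_aeval (![1, Polynomial.X] : Fin 2 → Polynomial ℂ) ξ
        ((⇑(pderiv (1 : Fin 2)))^[m] f)
      rw [hiter] at he
      have hvec : (fun i => Polynomial.eval ξ ((![1, Polynomial.X] : Fin 2 → Polynomial ℂ) i))
          = ![1, ξ] := by funext i; fin_cases i <;> simp
      rw [Polynomial.IsRoot.def, he, hvec]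
      exact hv
    have hle : ((d+1) • (Polynomial.nthRootsFinset k (1 : ℂ)).val) ≤ g.roots := by
      rw [Multiset.le_iff_count]
      intro a
      rw [Multiset.count_nsmul, Polynomial.count_roots]
      by_cases ha : a ∈ Polynomial.nthRootsFinset k (1 : ℂ)
      · rw [Multiset.count_eq_one_of_mem (Polynomial.nthRootsFinset k (1 : ℂ)).nodup ha]
        have := hmult a ((Polynomial.mem_nthRootsFinset hk1 (1 : ℂ)).1 ha)
        omega
      · rw [Multiset.count_eq_zero_of_notMem ha]
        simp
    have hcard := Multiset.card_le_card hle
    rw [Multiset.card_nsmul] at hcard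
    have hprim := Complex.isPrimitiveRoot_exp k (by omega)
    have hk' : (Polynomial.nthRootsFinset k (1 : ℂ)).val.card = k := hprim.card_nthRootsFinset
    have hdeg := natDegree_dehom_le f hf
    have hroots := Polynomial.card_roots' g
    rw [hk'] at hcard
    have harith : (d+1) * k = k * d + k := by ring
    rw [← hg] at hdeg
    omega
  have heval1 : ∀ t : ℂ, MvPolynomial.eval ![1, t] f = 0 := by
    intro t
    have he := evalPoly_aeval (![1, Polynomial.X] : Fin 2 → Polynomial ℂ) t f
    rw [← hg, hg0] at he
    have hvec : (fun i => Polynomial.eval t ((![1, Polynomial.X] : Fin 2 → Polynomial ℂ) i))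
        = ![1, t] := by funext i; fin_cases i <;> simp
    rw [hvec] at he
    simpa using he.symm
  have heval2 : ∀ x₀ x₁ : ℂ, x₀ ≠ 0 → MvPolynomial.eval ![x₀, x₁] f = 0 := by
    intro x₀ x₁ hx₀
    have hs := homog_eval_smul hf x₀ ![1, x₁ / x₀]
    have hvec : (fun i => x₀ * (![1, x₁ / x₀] : Fin 2 → ℂ) i) = ![x₀, x₁] := by
      funext i; fin_cases i <;> simp [mul_div_cancel₀, hx₀]
    rw [hvec, heval1, mul_zero] at hs
    exact hs
  have heval3 : ∀ x₀ x₁ : ℂ, MvPolynomial.eval ![x₀, x₁] f = 0 := by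
    intro x₀ x₁
    have hpoly : MvPolynomial.aeval
        (![Polynomial.X, Polynomial.C x₁] : Fin 2 → Polynomial ℂ) f = 0 := by
      apply Polynomial.eq_zero_of_infinite_isRoot
      apply Set.Infinite.mono (s := {x : ℂ | x ≠ 0})
      · intro t ht
        have he := evalPoly_aeval (![Polynomial.X, Polynomial.C x₁] : Fin 2 → Polynomial ℂ) t f
        have hvec : (fun i => Polynomial.eval t
            ((![Polynomial.X, Polynomial.C x₁] : Fin 2 → Polynomial ℂ) i)) = ![t, x₁] := by
          funext i; fin_cases i <;> simp
        rw [hvec] at he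
        simp only [Set.mem_setOf_eq, Polynomial.IsRoot.def, he]
        exact heval2 t x₁ ht
      · have : ({0}ᶜ : Set ℂ) = {x : ℂ | x ≠ 0} := by ext x; simp
        rw [← this]
        exact (Set.finite_singleton 0).infinite_compl
    have he := evalPoly_aeval (![Polynomial.X, Polynomial.C x₁] : Fin 2 → Polynomial ℂ) x₀ f
    have hvec : (fun i => Polynomial.eval x₀
        ((![Polynomial.X, Polynomial.C x₁] : Fin 2 → Polynomial ℂ) i)) = ![x₀, x₁] := by
      funext i; fin_cases i <;> simp
    rw [hvec, hpoly] at he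
    simpa using he.symm
  apply MvPolynomial.funext
  intro x
  have hx : x = ![x 0, x 1] := by funext i; fin_cases i <;> rfl
  rw [hx, heval3]
  simp
end

section
/- Let k ≥ 2 and n ≥ 1. Any form f of degree kd + k - 1 in n+1 complex variables all of whose partial derivatives of order ≤ d vanish at each of the k^n points (1, ξ_{i₁}, …, ξ_{iₙ}) (where the ξ_{iⱼ} range over all k-th roots of unity) is identically zero. -/
open MvPolynomial

noncomputable section

namespace RootsAux

open Finset


variable {N M : ℕ}

/-- iterated partial derivative along a list -/
def pdL (L : List (Fin N)) (f : MvPolynomial (Fin N) ℂ) : MvPolynomial (Fin N) ℂ :=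
  L.foldr (fun i g => pderiv i g) f

@[simp] lemma pdL_nil (f : MvPolynomial (Fin N) ℂ) : pdL [] f = f := rfl
@[simp] lemma pdL_cons (i : Fin N) (L : List (Fin N)) (f : MvPolynomial (Fin N) ℂ) :
    pdL (i :: L) f = pderiv i (pdL L f) := rfl

lemma derivsVanish_iff (f : MvPolynomial (Fin N) ℂ) (d : ℕ) (p : Fin N → ℂ) :
    derivsVanish f d p ↔ ∀ L : List (Fin N), L.length ≤ d → eval p (pdL L f) = 0 := Iff.rfl

lemma pdL_add (L : List (Fin N)) (f g : MvPolynomial (Fin N) ℂ) :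
    pdL L (f + g) = pdL L f + pdL L g := by
  induction L with
  | nil => rfl
  | cons i L ih => simp [ih]

lemma pdL_smul (L : List (Fin N)) (c : ℂ) (f : MvPolynomial (Fin N) ℂ) :
    pdL L (c • f) = c • pdL L f := by
  induction L with
  | nil => rfl
  | cons i L ih => simp [ih]

lemma pdL_sum {ι : Type*} (s : Finset ι) (L : List (Fin N)) (f : ι → MvPolynomial (Fin N) ℂ) :
    pdL L (∑ x ∈ s, f x) = ∑ x ∈ s, pdL L (f x) := by
  classical
  induction s using Finset.induction_on with
  | empty =>
    simp only [Finset.sum_empty]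
    induction L with
    | nil => rfl
    | cons i L ih => simp [ih]
  | insert _ _ hx ih => rw [Finset.sum_insert hx, Finset.sum_insert hx, pdL_add, ih]

lemma derivsVanish_sum {ι : Type*} (s : Finset ι) (f : ι → MvPolynomial (Fin N) ℂ)
    (d : ℕ) (p : Fin N → ℂ) (h : ∀ x ∈ s, derivsVanish (f x) d p) :
    derivsVanish (∑ x ∈ s, f x) d p := by
  intro L hL
  rw [show (L.foldr (fun i g => pderiv i g) (∑ x ∈ s, f x)) = pdL L (∑ x ∈ s, f x) from rfl,
    pdL_sum, map_sum]
  exact Finset.sum_eq_zero fun x hx => h x hx L hL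

lemma derivsVanish_smul (c : ℂ) (f : MvPolynomial (Fin N) ℂ) (d : ℕ) (p : Fin N → ℂ)
    (h : derivsVanish f d p) : derivsVanish (c • f) d p := by
  intro L hL
  rw [show (L.foldr (fun i g => pderiv i g) (c • f)) = pdL L (c • f) from rfl, pdL_smul]
  rw [smul_eq_C_mul, map_mul, show pdL L f = L.foldr (fun i g => pderiv i g) f from rfl,
    h L hL, mul_zero]

/-- chain rule for pderiv through aeval -/
lemma pderiv_aeval (s : Fin N → MvPolynomial (Fin M) ℂ) (f : MvPolynomial (Fin N) ℂ) (i : Fin M) :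
    pderiv i (aeval s f) = ∑ j, aeval s (pderiv j f) * pderiv i (s j) := by
  induction f using MvPolynomial.induction_on with
  | C a => simp
  | add p q hp hq =>
    simp only [map_add, hp, hq, add_mul, ← Finset.sum_add_distrib]
  | mul_X p j hp =>
    classical
    simp only [map_mul, aeval_X, pderiv_mul, hp, Finset.sum_mul, add_mul, map_add,
      Finset.sum_add_distrib]
    refine congrArg₂ (· + ·) ?_ ?_
    · apply Finset.sum_congr rfl; intro x _; ring
    · rw [Finset.sum_eq_single j]
      · simp
      · intro b _ hb
        simp [pderiv_X, Pi.single_eq_of_ne (Ne.symm hb)]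
      · simp

lemma aeval_eq_eval' (q : Fin M → ℂ) (p : MvPolynomial (Fin M) ℂ) : aeval q p = eval q p := by
  rw [aeval_def, Algebra.algebraMap_self]; rfl

lemma eval_aeval' (q : Fin M → ℂ) (s : Fin N → MvPolynomial (Fin M) ℂ)
    (f : MvPolynomial (Fin N) ℂ) :
    eval q (aeval s f) = eval (fun j => eval q (s j)) f := by
  rw [← aeval_eq_eval' q, comp_aeval_apply]
  simp [aeval_eq_eval']

/-- translation substitution -/
def tau (p : Fin N → ℂ) : MvPolynomial (Fin N) ℂ → MvPolynomial (Fin N) ℂ :=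
  fun f => aeval (fun j => X j + C (p j)) f

lemma pderiv_tau (p : Fin N → ℂ) (f : MvPolynomial (Fin N) ℂ) (i : Fin N) :
    pderiv i (tau p f) = tau p (pderiv i f) := by
  classical
  rw [tau, pderiv_aeval, Finset.sum_eq_single i]
  · simp [tau]
  · intro b _ hb
    simp [pderiv_X, Pi.single_eq_of_ne hb]
  · simp

lemma pdL_tau (p : Fin N → ℂ) (L : List (Fin N)) (f : MvPolynomial (Fin N) ℂ) :
    pdL L (tau p f) = tau p (pdL L f) := by
  induction L with
  | nil => rfl
  | cons i L ih => simp [ih, pderiv_tau]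

lemma derivsVanish_tau (p : Fin N → ℂ) (f : MvPolynomial (Fin N) ℂ) (d : ℕ)
    (h : derivsVanish f d p) : derivsVanish (tau p f) d 0 := by
  intro L hL
  rw [show (L.foldr (fun i g => pderiv i g) (tau p f)) = pdL L (tau p f) from rfl, pdL_tau,
    tau, eval_aeval']
  have hp : (fun j => (eval (0 : Fin N → ℂ)) (X j + C (p j))) = p := by funext j; simp
  rw [hp]
  exact h L hL


/-! ### Taylor: derivatives vanishing implies low coefficients of translate -/

lemma coeff_pderiv (i : Fin N) (e : Fin N →₀ ℕ) (f : MvPolynomial (Fin N) ℂ) :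
    coeff e (pderiv i f) = ((e i : ℂ) + 1) * coeff (e + Finsupp.single i 1) f := by
  induction f using MvPolynomial.induction_on' with
  | monomial s a =>
    rw [pderiv_monomial, coeff_monomial, coeff_monomial]
    by_cases hs : s = e + Finsupp.single i 1
    · subst hs
      rw [if_pos, if_pos rfl]
      · simp only [Finsupp.coe_add, Pi.add_apply, Finsupp.single_eq_same]
        push_cast
        ring
      · ext j
        by_cases hj : j = i <;> simp [hj]
    · rw [if_neg hs]
      by_cases hs2 : s - Finsupp.single i 1 = e
      · rw [if_pos hs2]
        have hsi : s i = 0 := by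
          by_contra hne
          apply hs
          ext j
          by_cases hj : j = i
          · subst hj
            have := congrFun (congrArg (↑·) hs2) j
            simp only [Finsupp.coe_tsub, Pi.sub_apply, Finsupp.single_eq_same] at this
            simp only [Finsupp.coe_add, Pi.add_apply, Finsupp.single_eq_same]
            omega
          · have := congrFun (congrArg (↑·) hs2) j
            simp only [Finsupp.coe_tsub, Pi.sub_apply,
              Finsupp.single_eq_of_ne' (Ne.symm hj)] at this
            simp [Finsupp.single_eq_of_ne' (Ne.symm hj)]
            omega
        simp [hsi]
      · simp [hs2]
  | add p q hp hq => simp [hp, hq]; ring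

lemma degree_eq_sum_univ (e : Fin N →₀ ℕ) : e.degree = ∑ i, e i := by
  rw [Finsupp.degree]
  apply Finset.sum_subset (Finset.subset_univ _)
  intro x _ hx
  simpa using Finsupp.notMem_support_iff.mp hx

lemma degree_add' (u v : Fin N →₀ ℕ) : (u + v).degree = u.degree + v.degree := by
  simp [degree_eq_sum_univ, Finset.sum_add_distrib]

lemma degree_single' (a : Fin N) (b : ℕ) : (Finsupp.single a b).degree = b := by
  rw [degree_eq_sum_univ, Finset.sum_eq_single a]
  · simp
  · intro c _ hc
    simp [Finsupp.single_eq_of_ne' (Ne.symm hc)]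
  · simp

/-- the exponent Finsupp associated to a list of variables -/
def listSum (L : List (Fin N)) : Fin N →₀ ℕ :=
  (L.map fun i => Finsupp.single i 1).sum

@[simp] lemma listSum_nil : listSum ([] : List (Fin N)) = 0 := rfl
@[simp] lemma listSum_cons (i : Fin N) (L : List (Fin N)) :
    listSum (i :: L) = Finsupp.single i 1 + listSum L := by
  simp [listSum]

lemma coeff_pdL (L : List (Fin N)) (e : Fin N →₀ ℕ) :
    ∃ c : ℂ, c ≠ 0 ∧ ∀ f : MvPolynomial (Fin N) ℂ,
      coeff e (pdL L f) = c * coeff (e + listSum L) f := by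
  induction L generalizing e with
  | nil => exact ⟨1, one_ne_zero, fun f => by simp⟩
  | cons i L ih =>
    obtain ⟨c, hc, hcf⟩ := ih (e + Finsupp.single i 1)
    refine ⟨((e i : ℂ) + 1) * c, ?_, fun f => ?_⟩
    · apply mul_ne_zero _ hc
      have : (0:ℝ) < (e i : ℝ) + 1 := by positivity
      intro hz
      rw [show ((e i : ℂ) + 1) = (((e i : ℝ) + 1 : ℝ) : ℂ) by push_cast; ring] at hz
      rw [Complex.ofReal_eq_zero] at hz
      linarith
    · rw [pdL_cons, coeff_pderiv, hcf f, listSum_cons, mul_assoc]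
      congr 2
      rw [add_assoc]

lemma listSum_replicate (b : ℕ) (a : Fin N) :
    listSum (List.replicate b a) = Finsupp.single a b := by
  induction b with
  | zero => simp
  | succ m ihm =>
    rw [List.replicate_succ, listSum_cons, ihm, ← Finsupp.single_add]
    congr 1
    omega

lemma exists_list_of_finsupp (e : Fin N →₀ ℕ) :
    ∃ L : List (Fin N), L.length = e.degree ∧ listSum L = e := by
  induction e using Finsupp.induction with
  | zero => exact ⟨[], by simp [map_zero], rfl⟩
  | single_add a b f ha hb ih =>
    obtain ⟨L, hL1, hL2⟩ := ih
    refine ⟨List.replicate b a ++ L, ?_, ?_⟩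
    · rw [List.length_append, List.length_replicate, hL1, degree_add', degree_single']
    · rw [show listSum (List.replicate b a ++ L) = listSum (List.replicate b a) + listSum L by
        simp [listSum]]
      rw [hL2, listSum_replicate]


lemma vanish_coeff_translate (f : MvPolynomial (Fin N) ℂ) (d : ℕ) (p : Fin N → ℂ)
    (h : derivsVanish f d p) :
    ∀ e : Fin N →₀ ℕ, e.degree ≤ d → coeff e (tau p f) = 0 := by
  intro e he
  have h0 := derivsVanish_tau p f d h
  obtain ⟨L, hL1, hL2⟩ := exists_list_of_finsupp e
  obtain ⟨c, hc, hcf⟩ := coeff_pdL L 0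
  have hz := h0 L (by rw [hL1]; exact he)
  rw [show L.foldr (fun i g => pderiv i g) (tau p f) = pdL L (tau p f) from rfl] at hz
  rw [show ((eval (0 : Fin N → ℂ)) (pdL L (tau p f))) = coeff 0 (pdL L (tau p f)) by
    rw [eval_zero, constantCoeff_eq]] at hz
  have h2 := hcf (tau p f)
  rw [hL2, zero_add, hz] at h2
  exact (mul_eq_zero.mp h2.symm).resolve_left hc

/-! ### low-degree vanishing and homogeneous components -/

/-- all coefficients in degrees `< m` vanish -/
def low (m : ℕ) (f : MvPolynomial (Fin N) ℂ) : Prop :=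
  ∀ e : Fin N →₀ ℕ, e.degree < m → coeff e f = 0

lemma low_zero_poly (m : ℕ) : low m (0 : MvPolynomial (Fin N) ℂ) := fun e _ => by simp

lemma low_zero (f : MvPolynomial (Fin N) ℂ) : low 0 f := fun e he => absurd he (by omega)

lemma low_mono {m m' : ℕ} (h : m' ≤ m) {f : MvPolynomial (Fin N) ℂ} (hf : low m f) :
    low m' f := fun e he => hf e (lt_of_lt_of_le he h)

lemma low_add {m : ℕ} {f g : MvPolynomial (Fin N) ℂ} (hf : low m f) (hg : low m g) :
    low m (f + g) := fun e he => by rw [coeff_add, hf e he, hg e he, add_zero]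

lemma low_sum {ι : Type*} {m : ℕ} (s : Finset ι) (f : ι → MvPolynomial (Fin N) ℂ)
    (hf : ∀ x ∈ s, low m (f x)) : low m (∑ x ∈ s, f x) := fun e he => by
  rw [coeff_sum]
  exact Finset.sum_eq_zero fun x hx => hf x hx e he

lemma low_mul {a b : ℕ} {A B : MvPolynomial (Fin N) ℂ} (hA : low a A) (hB : low b B) :
    low (a + b) (A * B) := by
  intro e he
  rw [coeff_mul]
  apply Finset.sum_eq_zero
  rintro ⟨u, v⟩ huv
  rw [Finset.HasAntidiagonal.mem_antidiagonal] at huv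
  have hd : u.degree + v.degree < a + b := by
    rw [← degree_add', huv]; exact he
  rcases lt_or_ge u.degree a with hu | hu
  · rw [hA u hu, zero_mul]
  · rw [hB v (by omega), mul_zero]

lemma low_pow {a : ℕ} {A : MvPolynomial (Fin N) ℂ} (hA : low a A) (t : ℕ) :
    low (a * t) (A ^ t) := by
  induction t with
  | zero => simpa using low_zero _
  | succ m ih =>
    rw [pow_succ, Nat.mul_succ]
    exact low_mul ih hA

lemma low_prod {ι : Type*} (s : Finset ι) (A : ι → MvPolynomial (Fin N) ℂ) (m : ι → ℕ)
    (h : ∀ i ∈ s, low (m i) (A i)) : low (∑ i ∈ s, m i) (∏ i ∈ s, A i) := by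
  classical
  induction s using Finset.induction_on with
  | empty => simpa using low_zero _
  | @insert x s hx ih =>
    rw [Finset.sum_insert hx, Finset.prod_insert hx]
    exact low_mul (h x (Finset.mem_insert_self _ _))
      (ih fun i hi => h i (Finset.mem_insert_of_mem hi))

lemma low_cm (m : ℕ) (f : MvPolynomial (Fin N) ℂ) : low m (homogeneousComponent m f) := by
  intro e he
  rw [coeff_homogeneousComponent, if_neg (by omega)]

lemma cm_eq_zero_of_low {m : ℕ} {f : MvPolynomial (Fin N) ℂ} (hf : low (m + 1) f) :
    homogeneousComponent m f = 0 := by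
  ext e
  rw [coeff_homogeneousComponent, coeff_zero]
  by_cases hd : e.degree = m
  · rw [if_pos hd]; exact hf e (by omega)
  · rw [if_neg hd]

lemma low_sub_cm {m : ℕ} {f : MvPolynomial (Fin N) ℂ} (hf : low m f) :
    low (m + 1) (f - homogeneousComponent m f) := by
  intro e he
  rw [coeff_sub, coeff_homogeneousComponent]
  by_cases hd : e.degree = m
  · rw [if_pos hd, sub_self]
  · rw [if_neg hd, sub_zero]
    exact hf e (by omega)

lemma cm_of_isHomogeneous {m : ℕ} {f : MvPolynomial (Fin N) ℂ} (hf : f.IsHomogeneous m) :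
    homogeneousComponent m f = f :=
  (homogeneousComponent_of_mem hf).trans (if_pos rfl)

lemma cm_of_isHomogeneous_ne {m t : ℕ} {f : MvPolynomial (Fin N) ℂ} (hf : f.IsHomogeneous t)
    (ht : m ≠ t) : homogeneousComponent m f = 0 :=
  (homogeneousComponent_of_mem hf).trans (if_neg ht)

lemma cm_mul_low {a b : ℕ} {A B : MvPolynomial (Fin N) ℂ} (hA : low a A) (hB : low b B) :
    homogeneousComponent (a + b) (A * B) =
      homogeneousComponent a A * homogeneousComponent b B := by
  have key : A * B = homogeneousComponent a A * homogeneousComponent b B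
      + (homogeneousComponent a A * (B - homogeneousComponent b B)
        + (A - homogeneousComponent a A) * B) := by ring
  rw [key, map_add, map_add]
  rw [cm_of_isHomogeneous ((homogeneousComponent_isHomogeneous a A).mul
    (homogeneousComponent_isHomogeneous b B))]
  rw [cm_eq_zero_of_low (m := a + b) (by
    have := low_mul (low_cm a A) (low_sub_cm hB)
    exact low_mono (by omega) this)]
  rw [cm_eq_zero_of_low (m := a + b) (by
    have := low_mul (low_sub_cm hA) hB
    exact low_mono (by omega) this)]
  simp


lemma aeval_monomial' (s : Fin N → MvPolynomial (Fin M) ℂ) (e : Fin N →₀ ℕ) (c : ℂ) :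
    aeval s (monomial e c) = C c * ∏ i, s i ^ e i := by
  rw [aeval_monomial, Finsupp.prod_fintype _ _ (fun i => pow_zero _)]
  rfl

lemma monomial_eq_prod (e : Fin N →₀ ℕ) (c : ℂ) :
    (monomial e c : MvPolynomial (Fin N) ℂ) = C c * ∏ i, X i ^ e i := by
  rw [monomial_eq, Finsupp.prod_fintype _ _ (fun i => pow_zero _)]

lemma cm_pow {a : ℕ} {A : MvPolynomial (Fin N) ℂ} (hA : low a A) (t : ℕ) :
    homogeneousComponent (a * t) (A ^ t) = homogeneousComponent a A ^ t := by
  induction t with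
  | zero =>
    simp
  | succ m ih =>
    rw [pow_succ, Nat.mul_succ, cm_mul_low (low_pow hA m) hA, ih, pow_succ]

lemma cm_prod {ι : Type*} (s : Finset ι) (A : ι → MvPolynomial (Fin N) ℂ) (m : ι → ℕ)
    (h : ∀ i ∈ s, low (m i) (A i)) :
    homogeneousComponent (∑ i ∈ s, m i) (∏ i ∈ s, A i) =
      ∏ i ∈ s, homogeneousComponent (m i) (A i) := by
  classical
  induction s using Finset.induction_on with
  | empty => simp
  | @insert x s hx ih =>
    rw [Finset.sum_insert hx, Finset.prod_insert hx, Finset.prod_insert hx,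
      cm_mul_low (h x (Finset.mem_insert_self _ _))
        (low_prod s A m fun i hi => h i (Finset.mem_insert_of_mem hi)),
      ih fun i hi => h i (Finset.mem_insert_of_mem hi)]

lemma aeval_as_sum (s : Fin N → MvPolynomial (Fin M) ℂ) (F : MvPolynomial (Fin N) ℂ) :
    aeval s F = ∑ e ∈ F.support, aeval s (monomial e (coeff e F)) := by
  conv_lhs => rw [as_sum F]
  rw [map_sum]

lemma low_aeval {m : ℕ} (s : Fin N → MvPolynomial (Fin N) ℂ) (hs : ∀ i, low 1 (s i))
    {F : MvPolynomial (Fin N) ℂ} (hF : low m F) : low m (aeval s F) := by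
  rw [aeval_as_sum]
  apply low_sum
  intro e he
  have hdeg : m ≤ e.degree := by
    by_contra hc
    exact (mem_support_iff.mp he) (hF e (by omega))
  apply low_mono hdeg
  rw [aeval_monomial']
  have h1 := low_mul (low_zero (C (coeff e F)))
    (low_prod univ (fun i => s i ^ e i) (fun i => 1 * e i) fun i _ => low_pow (hs i) (e i))
  simpa [degree_eq_sum_univ] using h1

lemma cm_aeval (k : ℕ) {m : ℕ} (s : Fin N → MvPolynomial (Fin N) ℂ)
    (hs1 : ∀ i, low 1 (s i))
    (hs2 : ∀ i, homogeneousComponent 1 (s i) = C (k : ℂ) * X i)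
    {F : MvPolynomial (Fin N) ℂ} (hF : low m F) :
    homogeneousComponent m (aeval s F) = C ((k : ℂ) ^ m) * homogeneousComponent m F := by
  conv_rhs => rw [as_sum F]
  rw [aeval_as_sum, map_sum, map_sum, Finset.mul_sum]
  apply Finset.sum_congr rfl
  intro e he
  have hdeg : m ≤ e.degree := by
    by_contra hc
    exact (mem_support_iff.mp he) (hF e (by omega))
  rcases eq_or_lt_of_le hdeg with heq | hlt
  · -- degree e = m
    have hsum : ∑ i, e i = m := by rw [← degree_eq_sum_univ, ← heq]
    have hBlow : low m (∏ i, s i ^ e i) := by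
      have := low_prod univ (fun i => s i ^ e i) (fun i => 1 * e i)
        (fun i _ => low_pow (hs1 i) (e i))
      simpa [hsum] using this
    have hstep : homogeneousComponent m (C (coeff e F) * ∏ i, s i ^ e i)
        = homogeneousComponent 0 (C (coeff e F))
          * homogeneousComponent m (∏ i, s i ^ e i) := by
      have := cm_mul_low (a := 0) (b := m) (low_zero (C (coeff e F))) hBlow
      rwa [zero_add] at this
    have hprodcm : homogeneousComponent m (∏ i, s i ^ e i)
        = ∏ i, (C (k : ℂ) * X i) ^ e i := by
      have h2 := cm_prod univ (fun i => s i ^ e i) (fun i => 1 * e i)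
        (fun i _ => low_pow (hs1 i) (e i))
      have h3 : ∑ i, 1 * e i = m := by simpa using hsum
      rw [h3] at h2
      rw [h2]
      apply Finset.prod_congr rfl
      intro i _
      rw [cm_pow (hs1 i) (e i), hs2 i]
    rw [aeval_monomial', hstep, hprodcm, homogeneousComponent_zero, coeff_zero_C,
      cm_of_isHomogeneous (isHomogeneous_monomial _ heq.symm), monomial_eq_prod]
    have hCk : (∏ i, (C (k:ℂ) * X i) ^ e i : MvPolynomial (Fin N) ℂ)
        = C ((k:ℂ) ^ m) * ∏ i, X i ^ e i := by
      simp_rw [mul_pow]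
      rw [Finset.prod_mul_distrib, Finset.prod_pow_eq_pow_sum, hsum, ← map_pow]
    rw [hCk]
    ring
  · -- degree e > m : both sides vanish
    rw [cm_of_isHomogeneous_ne (isHomogeneous_monomial _ rfl) (by omega), mul_zero]
    apply cm_eq_zero_of_low
    apply low_mono (show m + 1 ≤ e.degree by omega)
    rw [aeval_monomial']
    have := low_mul (low_zero (C (coeff e F)))
      (low_prod univ (fun i => s i ^ e i) (fun i => 1 * e i) fun i _ => low_pow (hs1 i) (e i))
    simpa [degree_eq_sum_univ] using this

lemma totalDegree_aeval_le (s : Fin N → MvPolynomial (Fin M) ℂ)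
    (hs : ∀ i, (s i).totalDegree ≤ 1) (F : MvPolynomial (Fin N) ℂ) :
    (aeval s F).totalDegree ≤ F.totalDegree := by
  rw [aeval_as_sum]
  apply (totalDegree_finset_sum _ _).trans
  apply Finset.sup_le
  intro e he
  rw [aeval_monomial']
  apply (totalDegree_mul _ _).trans
  rw [totalDegree_C, zero_add]
  apply (totalDegree_finset_prod _ _).trans
  have h1 : ∀ i, (s i ^ e i).totalDegree ≤ e i := by
    intro i
    apply (totalDegree_pow _ _).trans
    calc e i * (s i).totalDegree ≤ e i * 1 := Nat.mul_le_mul_left _ (hs i)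
    _ = e i := by omega
  calc ∑ i, (s i ^ e i).totalDegree ≤ ∑ i, e i := Finset.sum_le_sum fun i _ => h1 i
  _ = e.degree := (degree_eq_sum_univ e).symm
  _ ≤ F.totalDegree := by
    have := le_totalDegree he
    exact this

lemma sigma_low (kk : ℕ) (i : Fin N) :
    low 1 (((X i + 1) ^ kk - 1 : MvPolynomial (Fin N) ℂ)) := by
  intro e he
  have he0 : e = 0 := by
    rw [← Finsupp.degree_eq_zero_iff]
    omega
  subst he0
  rw [← constantCoeff_eq]
  simp

lemma sigma_cm (kk : ℕ) (hkk : 1 ≤ kk) (i : Fin N) :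
    homogeneousComponent 1 ((X i + 1) ^ kk - 1 : MvPolynomial (Fin N) ℂ)
      = C (kk : ℂ) * X i := by
  rw [map_sub, cm_of_isHomogeneous_ne (isHomogeneous_one (Fin N) ℂ) one_ne_zero, sub_zero]
  rw [add_pow]
  rw [map_sum]
  rw [Finset.sum_eq_single 1]
  · have hh : (X i ^ 1 * 1 ^ (kk - 1) * (kk.choose 1 : MvPolynomial (Fin N) ℂ))
        = C (kk : ℂ) * X i := by
      rw [Nat.choose_one_right, ← C_eq_coe_nat]
      ring
    rw [hh, cm_of_isHomogeneous ?_]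
    rw [← hh]
    have : (X i ^ 1 * 1 ^ (kk - 1) * ((kk.choose 1 : ℕ) : MvPolynomial (Fin N) ℂ))
        = monomial (Finsupp.single i 1) ((kk : ℂ)) := by
      rw [Nat.choose_one_right, ← C_eq_coe_nat]
      rw [monomial_eq]
      simp [Finsupp.prod_single_index]
      ring
    rw [this]
    apply isHomogeneous_monomial
    rw [degree_single']
  · intro j _ hj
    apply cm_of_isHomogeneous_ne (t := j)
    · have : (X i ^ j * 1 ^ (kk - j) * ((kk.choose j : ℕ) : MvPolynomial (Fin N) ℂ))
          = monomial (Finsupp.single i j) ((kk.choose j : ℂ)) := by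
        rw [← C_eq_coe_nat, monomial_eq]
        simp [Finsupp.prod_single_index]
        ring
      rw [this]
      apply isHomogeneous_monomial
      rw [degree_single']
    · exact Ne.symm hj
  · intro h1
    exact absurd (Finset.mem_range.mpr (by omega)) h1

lemma exists_min_degree {F : MvPolynomial (Fin N) ℂ} (hF : F ≠ 0) :
    ∃ m, m ≤ F.totalDegree ∧ low m F ∧ homogeneousComponent m F ≠ 0 := by
  have hsupp : F.support.Nonempty := support_nonempty.mpr hF
  have hS : (F.support.image Finsupp.degree).Nonempty := hsupp.image _
  obtain ⟨e, he, hedeg⟩ := Finset.mem_image.mp ((F.support.image Finsupp.degree).min'_mem hS)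
  refine ⟨(F.support.image Finsupp.degree).min' hS, ?_, ?_, ?_⟩
  · rw [← hedeg]
    exact le_totalDegree he
  · intro e' he'
    by_contra hc
    have := Finset.min'_le (F.support.image Finsupp.degree) e'.degree
      (Finset.mem_image.mpr ⟨e', mem_support_iff.mpr hc, rfl⟩)
    omega
  · intro hzero
    have hce : coeff e (homogeneousComponent ((F.support.image Finsupp.degree).min' hS) F)
        = 0 := by rw [hzero]; simp
    rw [coeff_homogeneousComponent, if_pos hedeg] at hce
    exact mem_support_iff.mp he hce


/-! ### the isotypic case -/

lemma isotypic_vanish {n k d : ℕ} (hk : 2 ≤ k) (h : MvPolynomial (Fin n) ℂ)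
    (a : Fin n → ℕ)
    (hiso : ∀ e ∈ h.support, ∀ i, e i % k = a i)
    (hdeg : h.totalDegree ≤ k * d + k - 1)
    (hvan : derivsVanish h d (fun _ => 1)) : h = 0 := by
  classical
  by_contra h0
  have hk0 : 0 < k := by omega
  set divA : (Fin n →₀ ℕ) → (Fin n →₀ ℕ) :=
    fun e => Finsupp.equivFunOnFinite.symm (fun i => (e i - a i) / k) with hdivA
  set aF : Fin n →₀ ℕ := Finsupp.equivFunOnFinite.symm a with haF
  set G : MvPolynomial (Fin n) ℂ := ∑ e ∈ h.support, monomial (divA e) (coeff e h) with hG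
  have hpoint : ∀ e ∈ h.support, ∀ i, a i + k * ((e i - a i) / k) = e i := by
    intro e he i
    have hmod := hiso e he i
    have h1 := Nat.mod_add_div (e i) k
    have h2 : e i - a i = k * (e i / k) := by omega
    rw [h2, Nat.mul_div_cancel_left _ hk0]
    omega
  have hkey : h = monomial aF 1 * aeval (fun i => X i ^ k) G := by
    conv_lhs => rw [as_sum h]
    rw [hG, map_sum, Finset.mul_sum]
    apply Finset.sum_congr rfl
    intro e he
    rw [aeval_monomial', monomial_eq_prod, monomial_eq_prod]
    have : ∀ i : Fin n, ((X i : MvPolynomial (Fin n) ℂ) ^ k) ^ (divA e i)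
        = X i ^ (k * divA e i) := fun i => by rw [← pow_mul]
    simp_rw [this]
    rw [map_one, one_mul, mul_left_comm, ← Finset.prod_mul_distrib]
    congr 1
    apply Finset.prod_congr rfl
    intro i _
    rw [← pow_add]
    congr 1
    have := hpoint e he i
    simp only [hdivA, haF, Finsupp.coe_equivFunOnFinite_symm]
    omega
  have hGne : G ≠ 0 := by
    intro hG0
    rw [hG0, map_zero, mul_zero] at hkey
    exact h0 hkey
  have hdegG : G.totalDegree ≤ d := by
    rw [hG]
    apply (totalDegree_finset_sum _ _).trans
    apply Finset.sup_le
    intro e he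
    apply (totalDegree_monomial_le _ _).trans
    have hdd : (divA e).degree = ∑ i, (e i - a i) / k := by
      rw [degree_eq_sum_univ]
      apply Finset.sum_congr rfl
      intro i _
      simp [hdivA]
    have hmul : k * ∑ i, (e i - a i) / k = ∑ i, (e i - a i) := by
      rw [Finset.mul_sum]
      apply Finset.sum_congr rfl
      intro i _
      have := hpoint e he i
      omega
    have hbound : ∑ i, (e i - a i) ≤ e.degree := by
      rw [degree_eq_sum_univ]
      apply Finset.sum_le_sum
      intro i _
      omega
    have hde : e.degree ≤ k * d + k - 1 := (le_totalDegree he).trans hdeg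
    have hkd : k * (d + 1) = k * d + k := by ring
    have : k * (divA e).degree < k * (d + 1) := by
      rw [hdd, hmul]
      omega
    have := Nat.lt_of_mul_lt_mul_left this
    -- (monomial s c).totalDegree ≤ s.sum _ ; identify with degree
    show (divA e).sum (fun _ v => v) ≤ d
    rw [show (divA e).sum (fun _ v => v) = (divA e).degree from rfl]
    omega
  set p1 : Fin n → ℂ := fun _ => 1 with hp1
  have hFne : tau p1 G ≠ 0 := by
    intro hz
    have hinv : aeval (fun j => X j - C (p1 j)) (tau p1 G) = G := by
      rw [tau, comp_aeval_apply]
      simp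
    rw [hz, map_zero] at hinv
    exact hGne hinv.symm
  have hdegtau : (tau p1 G).totalDegree ≤ d := by
    apply le_trans _ hdegG
    apply totalDegree_aeval_le
    intro i
    exact (totalDegree_add _ _).trans (by simp [totalDegree_X, totalDegree_C])
  obtain ⟨m, hm1, hm2, hm3⟩ := exists_min_degree hFne
  have hmd : m ≤ d := hm1.trans hdegtau
  have htauh_low : low (d + 1) (tau p1 h) := by
    intro e he
    exact vanish_coeff_translate h d p1 hvan e (by omega)
  -- split tau p1 h as a product
  set sb : Fin n → MvPolynomial (Fin n) ℂ := fun i => (X i + 1) ^ k - 1 with hsb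
  have hsplit : tau p1 h = tau p1 (monomial aF 1) * aeval sb (tau p1 G) := by
    rw [hkey, tau, map_mul]
    refine congrArg (tau p1 (monomial aF 1) * ·) ?_
    rw [show (aeval (fun j => X j + C (p1 j))) ((aeval fun i => X i ^ k) G)
        = aeval (fun i => (X i + C (p1 i)) ^ k) G by
      rw [comp_aeval_apply]
      simp]
    rw [show (aeval sb) (tau p1 G) = aeval (fun i => aeval sb (X i + C (p1 i))) G from by
      rw [tau, comp_aeval_apply]]
    have hfun : (fun i => (aeval sb) (X i + C (p1 i)))
        = fun i => (X i + C (p1 i)) ^ k := by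
      funext i
      rw [map_add, aeval_X, aeval_C]
      simp [hsb, sub_add_cancel, hp1]
    rw [hfun]
  -- compute the m-th homogeneous component of tau p1 h
  have hlowW : low m (aeval sb (tau p1 G)) := low_aeval sb (fun i => sigma_low k i) hm2
  have hcmprod : homogeneousComponent m (tau p1 h)
      = homogeneousComponent 0 (tau p1 (monomial aF 1))
        * homogeneousComponent m (aeval sb (tau p1 G)) := by
    rw [hsplit]
    have := cm_mul_low (a := 0) (b := m) (low_zero (tau p1 (monomial aF 1))) hlowW
    rwa [zero_add] at this
  have hconst : constantCoeff (tau p1 (monomial aF 1)) = 1 := by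
    rw [← eval_zero, tau, eval_aeval']
    have : (fun j => (eval (0 : Fin n → ℂ)) (X j + C (p1 j))) = p1 := by
      funext j
      simp
    rw [this, eval_monomial]
    simp [hp1, Finsupp.prod]
  have hcmW : homogeneousComponent m (aeval sb (tau p1 G))
      = C ((k : ℂ) ^ m) * homogeneousComponent m (tau p1 G) :=
    cm_aeval k sb (fun i => sigma_low k i) (fun i => sigma_cm k (by omega) i) hm2
  have hc0 : coeff 0 (tau p1 (monomial aF 1)) = 1 := by
    rw [← constantCoeff_eq]
    exact hconst
  have hne : homogeneousComponent m (tau p1 h) ≠ 0 := by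
    rw [hcmprod, homogeneousComponent_zero, hc0, hcmW]
    simp only [map_one, one_mul]
    apply mul_ne_zero _ hm3
    rw [Ne, C_eq_zero]
    exact pow_ne_zero _ (Nat.cast_ne_zero.mpr (by omega))
  exact hne (cm_eq_zero_of_low (low_mono (by omega) htauh_low))


/-! ### scaling and roots-of-unity averaging -/

/-- scaling substitution -/
def rho (z : Fin N → ℂ) : MvPolynomial (Fin N) ℂ → MvPolynomial (Fin N) ℂ :=
  fun f => aeval (fun j => C (z j) * X j) f

lemma pderiv_rho (z : Fin N → ℂ) (f : MvPolynomial (Fin N) ℂ) (i : Fin N) :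
    pderiv i (rho z f) = C (z i) * rho z (pderiv i f) := by
  classical
  rw [rho, pderiv_aeval, Finset.sum_eq_single i]
  · simp [rho, mul_comm]
  · intro b _ hb
    simp [pderiv_X, Pi.single_eq_of_ne hb]
  · simp

lemma pdL_rho (z : Fin N → ℂ) (L : List (Fin N)) (f : MvPolynomial (Fin N) ℂ) :
    pdL L (rho z f) = C ((L.map z).prod) * rho z (pdL L f) := by
  induction L with
  | nil => simp
  | cons i L ih =>
    rw [pdL_cons, ih, pderiv_C_mul, pderiv_rho, List.map_cons, List.prod_cons, map_mul,
      pdL_cons]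
    ring

lemma derivsVanish_rho (z : Fin N → ℂ) (f : MvPolynomial (Fin N) ℂ) (d : ℕ)
    (h : derivsVanish f d z) : derivsVanish (rho z f) d (fun _ => 1) := by
  intro L hL
  rw [show L.foldr (fun i g => pderiv i g) (rho z f) = pdL L (rho z f) from rfl, pdL_rho,
    map_mul, rho, eval_aeval']
  have hz : (fun j => (eval fun _ => (1:ℂ)) (C (z j) * X j)) = z := by
    funext j; simp
  rw [hz, show (eval z) (pdL L f) = 0 from h L hL, mul_zero]

lemma coeff_rho (z : Fin N → ℂ) (f : MvPolynomial (Fin N) ℂ) (e : Fin N →₀ ℕ) :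
    coeff e (rho z f) = (∏ i, z i ^ e i) * coeff e f := by
  classical
  rw [rho, aeval_as_sum]
  have hterm : ∀ u : Fin N →₀ ℕ,
      (aeval fun j => C (z j) * X j) (monomial u (coeff u f))
        = monomial u ((∏ i, z i ^ u i) * coeff u f) := by
    intro u
    rw [aeval_monomial', monomial_eq_prod]
    simp_rw [mul_pow]
    rw [Finset.prod_mul_distrib]
    have : (∏ i, (C (z i)) ^ u i : MvPolynomial (Fin N) ℂ) = C (∏ i, z i ^ u i) := by
      rw [map_prod]
      simp_rw [map_pow]
    rw [this, map_mul]
    ring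
  simp_rw [hterm]
  rw [coeff_sum]
  simp_rw [coeff_monomial]
  rw [Finset.sum_ite_eq' f.support e]
  by_cases he : e ∈ f.support
  · rw [if_pos he]
  · rw [if_neg he]
    rw [mem_support_iff, not_not] at he
    rw [he, mul_zero]

lemma root_orth {k : ℕ} {ζ : ℂ} (hζ : IsPrimitiveRoot ζ k) (hk : 0 < k) (mz : ℤ) :
    ∑ j ∈ Finset.range k, ζ ^ ((j : ℤ) * mz) = if (k : ℤ) ∣ mz then (k : ℂ) else 0 := by
  have hrw : ∀ j ∈ Finset.range k, ζ ^ ((j : ℤ) * mz) = (ζ ^ mz) ^ j := by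
    intro j _
    rw [mul_comm, zpow_mul, zpow_natCast]
  rw [Finset.sum_congr rfl hrw]
  by_cases hd : (k : ℤ) ∣ mz
  · rw [if_pos hd, (hζ.zpow_eq_one_iff_dvd mz).mpr hd]
    simp
  · rw [if_neg hd]
    have hne : ζ ^ mz ≠ 1 := fun hcon => hd ((hζ.zpow_eq_one_iff_dvd mz).mp hcon)
    rw [geom_sum_eq hne]
    have : (ζ ^ mz) ^ k = 1 := by
      rw [← zpow_natCast (ζ ^ mz) k, ← zpow_mul, mul_comm, zpow_mul, zpow_natCast,
        hζ.pow_eq_one, one_zpow]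
    rw [this, sub_self, zero_div]


/-! ### the affine case -/

lemma affine_vanish {n k d : ℕ} (hk : 2 ≤ k) (g : MvPolynomial (Fin n) ℂ)
    (hdeg : g.totalDegree ≤ k * d + k - 1)
    (hvan : ∀ t : Fin n → ℂ, (∀ j, t j ^ k = 1) → derivsVanish g d t) : g = 0 := by
  classical
  have hk0 : 0 < k := by omega
  set ζ : ℂ := Complex.exp (2 * Real.pi * Complex.I / k) with hzeta
  have hζ : IsPrimitiveRoot ζ k := Complex.isPrimitiveRoot_exp k (by omega)
  have hζne : ζ ≠ 0 := Complex.exp_ne_zero _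
  ext e0
  rw [coeff_zero]
  set a : Fin n → ℕ := fun i => e0 i % k with ha
  set zc : (Fin n → Fin k) → (Fin n → ℂ) := fun c i => ζ ^ ((c i : ℕ)) with hzc
  set w : (Fin n → Fin k) → ℂ := fun c => (∏ i, ζ ^ ((c i : ℕ) * a i))⁻¹ with hw
  set H : MvPolynomial (Fin n) ℂ := ∑ c : Fin n → Fin k, w c • rho (zc c) g with hH
  -- the coefficient formula
  have hcoeff : ∀ e : Fin n →₀ ℕ, coeff e H
      = (∏ i, ∑ j ∈ Finset.range k, ζ ^ ((j : ℤ) * ((e i : ℤ) - (a i : ℤ))))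
        * coeff e g := by
    intro e
    rw [hH, coeff_sum]
    have hterm : ∀ c : Fin n → Fin k,
        coeff e (w c • rho (zc c) g)
          = (∏ i, ζ ^ (((c i : ℕ) : ℤ) * ((e i : ℤ) - (a i : ℤ)))) * coeff e g := by
      intro c
      rw [coeff_smul, coeff_rho, smul_eq_mul, ← mul_assoc]
      congr 1
      simp only [hw, hzc]
      rw [← Finset.prod_inv_distrib, ← Finset.prod_mul_distrib]
      apply Finset.prod_congr rfl
      intro i _
      rw [show ((ζ ^ ((c i : ℕ) * a i))⁻¹ : ℂ) = ζ ^ (-(((c i : ℕ) * a i : ℕ) : ℤ)) by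
        rw [zpow_neg, zpow_natCast]]
      rw [show ((ζ ^ ((c i : ℕ))) ^ e i : ℂ) = ζ ^ ((((c i : ℕ) * e i : ℕ)) : ℤ) by
        rw [zpow_natCast, ← pow_mul]]
      rw [← zpow_add₀ hζne]
      congr 1
      push_cast
      ring
    rw [Finset.sum_congr rfl fun c _ => hterm c, ← Finset.sum_mul]
    congr 1
    have hfac : ∀ i : Fin n, (∑ j ∈ Finset.range k, ζ ^ ((j : ℤ) * ((e i : ℤ) - (a i : ℤ))))
        = ∑ j : Fin k, ζ ^ (((j : ℕ) : ℤ) * ((e i : ℤ) - (a i : ℤ))) :=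
      fun i => (Fin.sum_univ_eq_sum_range
        (fun j => ζ ^ ((j : ℤ) * ((e i : ℤ) - (a i : ℤ)))) k).symm
    rw [Finset.prod_congr rfl fun i _ => hfac i, Fintype.prod_sum]
  have hHdeg : H.totalDegree ≤ k * d + k - 1 := by
    rw [hH]
    apply (totalDegree_finset_sum _ _).trans
    apply Finset.sup_le
    intro c _
    apply (totalDegree_smul_le _ _).trans
    apply le_trans _ hdeg
    apply totalDegree_aeval_le
    intro i
    exact (totalDegree_mul _ _).trans (by simp [totalDegree_C, totalDegree_X])
  have hHiso : ∀ e ∈ H.support, ∀ i, e i % k = a i := by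
    intro e he i
    have hco := mem_support_iff.mp he
    rw [hcoeff e] at hco
    have hprod : (∏ i, ∑ j ∈ Finset.range k,
        ζ ^ ((j : ℤ) * ((e i : ℤ) - (a i : ℤ)))) ≠ 0 :=
      fun hz => hco (by rw [hz, zero_mul])
    have hfac := Finset.prod_ne_zero_iff.mp hprod i (Finset.mem_univ i)
    rw [root_orth hζ hk0] at hfac
    by_cases hdvd : (k : ℤ) ∣ (e i : ℤ) - (a i : ℤ)
    swap
    · rw [if_neg hdvd] at hfac
      exact absurd rfl hfac
    obtain ⟨t, ht⟩ := hdvd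
    have hta : a i < k := Nat.mod_lt _ hk0
    have hta' : ((a i : ℤ)) < (k : ℤ) := by exact_mod_cast hta
    have he0' : (0 : ℤ) ≤ (e i : ℤ) := Int.natCast_nonneg _
    have ht0 : 0 ≤ t := by
      by_contra h'
      push_neg at h'
      have h1 : t ≤ -1 := by omega
      have h2 : (k : ℤ) * t ≤ (k : ℤ) * (-1) :=
        mul_le_mul_of_nonneg_left h1 (by exact_mod_cast Nat.zero_le k)
      linarith
    have heT : (e i : ℤ) = (a i : ℤ) + (k : ℤ) * (t.toNat : ℤ) := by
      rw [Int.toNat_of_nonneg ht0]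
      linarith
    have heN : e i = a i + k * t.toNat := by exact_mod_cast heT
    rw [heN, Nat.add_mul_mod_self_left, Nat.mod_eq_of_lt hta]
  have hHvan : derivsVanish H d (fun _ => 1) := by
    rw [hH]
    apply derivsVanish_sum
    intro c _
    apply derivsVanish_smul
    apply derivsVanish_rho
    apply hvan
    intro j
    simp only [hzc]
    rw [← pow_mul, mul_comm, pow_mul, hζ.pow_eq_one, one_pow]
  have hH0 : H = 0 := isotypic_vanish hk H a hHiso hHdeg hHvan
  have hfin := hcoeff e0
  rw [hH0, coeff_zero] at hfin
  have hdvd0 : ∀ i, (k : ℤ) ∣ (e0 i : ℤ) - (a i : ℤ) := by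
    intro i
    refine ⟨((e0 i / k : ℕ) : ℤ), ?_⟩
    have hmd := Nat.mod_add_div (e0 i) k
    have hmd' : ((e0 i % k : ℕ) : ℤ) + ((k * (e0 i / k) : ℕ) : ℤ) = (e0 i : ℤ) := by
      exact_mod_cast hmd
    push_cast at hmd'
    simp only [ha]
    push_cast
    linarith
  have hprodk : (∏ i : Fin n, ∑ j ∈ Finset.range k,
      ζ ^ ((j : ℤ) * ((e0 i : ℤ) - (a i : ℤ)))) = (k : ℂ) ^ n := by
    rw [Finset.prod_congr rfl fun i _ => by rw [root_orth hζ hk0, if_pos (hdvd0 i)]]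
    simp [Finset.prod_const, Finset.card_univ]
  rw [hprodk] at hfin
  have hkn : ((k : ℂ)) ^ n ≠ 0 := pow_ne_zero _ (Nat.cast_ne_zero.mpr (by omega))
  exact (mul_eq_zero.mp hfin.symm).resolve_left hkn


/-! ### dehomogenization -/

/-- tail of an exponent vector -/
def tailF {n : ℕ} (e : Fin (n + 1) →₀ ℕ) : Fin n →₀ ℕ :=
  Finsupp.equivFunOnFinite.symm (fun j => e j.succ)

@[simp] lemma tailF_apply {n : ℕ} (e : Fin (n + 1) →₀ ℕ) (j : Fin n) :
    tailF e j = e j.succ := by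
  simp [tailF]

lemma tailF_inj {n : ℕ} {m e : Fin (n + 1) →₀ ℕ} (h1 : m.degree = e.degree)
    (h2 : tailF m = tailF e) : m = e := by
  have h3 : ∀ j : Fin n, m j.succ = e j.succ := by
    intro j
    have := congrArg (fun v => v j) h2
    simpa using this
  have h4 : m 0 = e 0 := by
    rw [degree_eq_sum_univ, degree_eq_sum_univ, Fin.sum_univ_succ, Fin.sum_univ_succ] at h1
    rw [Finset.sum_congr rfl (fun j _ => h3 j)] at h1
    omega
  ext i
  refine Fin.cases ?_ ?_ i
  · exact h4
  · exact h3

lemma pderiv_dehom {n : ℕ} (f : MvPolynomial (Fin (n + 1)) ℂ) (i : Fin n) :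
    pderiv i (aeval (Fin.cons 1 fun j => X j : Fin (n + 1) → MvPolynomial (Fin n) ℂ) f)
      = aeval (Fin.cons 1 fun j => X j : Fin (n + 1) → MvPolynomial (Fin n) ℂ)
          (pderiv i.succ f) := by
  classical
  rw [pderiv_aeval, Fin.sum_univ_succ]
  simp only [Fin.cons_zero, Fin.cons_succ]
  rw [show (pderiv i (1 : MvPolynomial (Fin n) ℂ)) = 0 from pderiv_one, mul_zero, zero_add]
  rw [Finset.sum_eq_single i]
  · simp
  · intro b _ hb
    simp [pderiv_X, Pi.single_eq_of_ne hb]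
  · simp

lemma pdL_dehom {n : ℕ} (L : List (Fin n)) (f : MvPolynomial (Fin (n + 1)) ℂ) :
    pdL L (aeval (Fin.cons 1 fun j => X j : Fin (n + 1) → MvPolynomial (Fin n) ℂ) f)
      = aeval (Fin.cons 1 fun j => X j : Fin (n + 1) → MvPolynomial (Fin n) ℂ)
          (pdL (L.map Fin.succ) f) := by
  induction L with
  | nil => rfl
  | cons i L ih => rw [pdL_cons, ih, pderiv_dehom, List.map_cons, pdL_cons]

lemma derivsVanish_dehom {n d : ℕ} (f : MvPolynomial (Fin (n + 1)) ℂ) (t : Fin n → ℂ)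
    (h : derivsVanish f d (Fin.cons 1 t)) :
    derivsVanish (aeval (Fin.cons 1 fun j => X j : Fin (n + 1) → MvPolynomial (Fin n) ℂ) f)
      d t := by
  intro L hL
  rw [show L.foldr (fun i g => pderiv i g) _ = pdL L
    (aeval (Fin.cons 1 fun j => X j : Fin (n + 1) → MvPolynomial (Fin n) ℂ) f) from rfl]
  rw [pdL_dehom, eval_aeval']
  have hfun : (fun j => (eval t) ((Fin.cons 1 fun j => X j :
      Fin (n + 1) → MvPolynomial (Fin n) ℂ) j)) = Fin.cons 1 t := by
    funext j
    refine Fin.cases ?_ ?_ j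
    · simp
    · intro j'
      simp
  rw [hfun]
  exact h (L.map Fin.succ) (by rw [List.length_map]; exact hL)

lemma aeval_dehom_monomial {n : ℕ} (m : Fin (n + 1) →₀ ℕ) (c : ℂ) :
    aeval (Fin.cons 1 fun j => X j : Fin (n + 1) → MvPolynomial (Fin n) ℂ) (monomial m c)
      = monomial (tailF m) c := by
  rw [aeval_monomial', monomial_eq_prod, Fin.prod_univ_succ]
  simp [Fin.cons_zero, Fin.cons_succ, one_pow, one_mul, tailF_apply]

end RootsAux

end

open RootsAux

/-- Let `k ≥ 2` and `n ≥ 1`. Any form of degree `kd + k - 1` in `n+1` complex variables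
all of whose partial derivatives of order `≤ d` vanish at each of the `k^n` points
`(1, ξ_{i₁}, …, ξ_{iₙ})` (the `ξ`'s ranging over all `k`-th roots of unity) is zero. -/
theorem form_vanishing_at_roots_of_unity_points (n k d : ℕ) (hn : 1 ≤ n) (hk : 2 ≤ k)
    (f : MvPolynomial (Fin (n + 1)) ℂ) (hf : f.IsHomogeneous (k * d + k - 1))
    (h : ∀ t : Fin n → ℂ, (∀ j, t j ^ k = 1) → derivsVanish f d (Fin.cons 1 t)) :
    f = 0 := by
  classical
  set g : MvPolynomial (Fin n) ℂ :=
    aeval (Fin.cons 1 fun j => X j : Fin (n + 1) → MvPolynomial (Fin n) ℂ) f with hg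
  have hsdeg : ∀ i : Fin (n + 1),
      ((Fin.cons 1 fun j => X j : Fin (n + 1) → MvPolynomial (Fin n) ℂ) i).totalDegree ≤ 1 := by
    intro i
    refine Fin.cases ?_ ?_ i
    · simp
    · intro j
      simp [totalDegree_X]
  have hgdeg : g.totalDegree ≤ k * d + k - 1 :=
    (totalDegree_aeval_le _ hsdeg f).trans hf.totalDegree_le
  have hgvan : ∀ t : Fin n → ℂ, (∀ j, t j ^ k = 1) → derivsVanish g d t :=
    fun t ht => derivsVanish_dehom f t (h t ht)
  have hg0 : g = 0 := affine_vanish hk g hgdeg hgvan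
  have hdm : ∀ m ∈ f.support, m.degree = k * d + k - 1 := by
    intro m hm
    rw [Finsupp.degree_eq_weight_one]
    exact hf (mem_support_iff.mp hm)
  ext e
  rw [coeff_zero]
  by_cases hdeg : e.degree = k * d + k - 1
  swap
  · exact hf.coeff_eq_zero hdeg
  · have hcoeffg : coeff (tailF e) g = coeff e f := by
      rw [hg, aeval_as_sum,
        Finset.sum_congr rfl fun m _ => aeval_dehom_monomial m (coeff m f), coeff_sum]
      simp_rw [coeff_monomial]
      rw [Finset.sum_eq_single e]
      · rw [if_pos rfl]
      · intro m hm hme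
        rw [if_neg]
        intro htail
        exact hme (tailF_inj (by rw [hdm m hm, hdeg]) htail)
      · intro hnot
        rw [if_pos rfl]
        exact notMem_support_iff.mp hnot
    rw [← hcoeffg, hg0, coeff_zero]
end

section
/- Let g₁, …, g_p be forms of degree d in ℂ[x₀, …, xₙ]. The image of the map (f₁, …, f_p) ↦ Σ g_i^{k-1} f_i (with f_i of degree d) equals the span of the tangent spaces at g_i^k to the variety of k-th powers in S^{kd}; in particular, if the ideal generated by g₁^{k-1}, …, g_p^{k-1} contains all of S^{kd}, then the set of sums of p k-th powers of degree-d forms is Zariski dense in S^{kd}. -/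
open MvPolynomial

private lemma aux_pow_expand {A : Type*} [CommRing A] (x y : A) {k : ℕ} (hk : 1 ≤ k) :
    ∃ z, (x + y) ^ k = x ^ k + (k : A) * x ^ (k - 1) * y + y ^ 2 * z := by
  induction k, hk using Nat.le_induction with
  | base => exact ⟨0, by simp⟩
  | succ k hk ih =>
    obtain ⟨z, hz⟩ := ih
    refine ⟨(k : A) * x ^ (k - 1) + z * x + z * y, ?_⟩
    have hx : x ^ (k - 1) * x = x ^ k := pow_sub_one_mul (by omega) x
    have h1 : (k + 1 : ℕ) - 1 = k := rfl
    calc (x + y) ^ (k + 1) = (x ^ k + (k : A) * x ^ (k - 1) * y + y ^ 2 * z) * (x + y) := by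
          rw [pow_succ, hz]
      _ = x ^ k * x + ((k : A) * (x ^ (k - 1) * x)) * y + x ^ k * y
            + y ^ 2 * ((k : A) * x ^ (k - 1) + z * x + z * y) := by ring
      _ = x ^ (k + 1) + ((k : A) + 1) * x ^ k * y
            + y ^ 2 * ((k : A) * x ^ (k - 1) + z * x + z * y) := by
          rw [hx, ← pow_succ]; ring
      _ = _ := by rw [h1]; push_cast; ring

private lemma aux_natDegree_aeval_le {σ : Type*} (P : MvPolynomial σ ℂ) (c : σ → Polynomial ℂ)
    (hc : ∀ i, (c i).natDegree ≤ 1) : (MvPolynomial.aeval c P).natDegree ≤ P.totalDegree := by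
  rw [MvPolynomial.aeval_def, MvPolynomial.eval₂_eq]
  refine Polynomial.natDegree_sum_le_of_forall_le _ _ ?_
  intro m hm
  have h2 : (∏ i ∈ m.support, c i ^ m i).natDegree ≤ ∑ i ∈ m.support, m i := by
    refine (Polynomial.natDegree_prod_le _ _).trans ?_
    refine Finset.sum_le_sum fun i _ => ?_
    refine Polynomial.natDegree_pow_le.trans ?_
    calc m i * (c i).natDegree ≤ m i * 1 := Nat.mul_le_mul_left _ (hc i)
      _ = m i := Nat.mul_one _
  have h3 : (m.sum fun _ e => e) ≤ P.totalDegree := MvPolynomial.le_totalDegree hm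
  calc (algebraMap ℂ (Polynomial ℂ) (P.coeff m) * ∏ i ∈ m.support, c i ^ m i).natDegree
      ≤ (algebraMap ℂ (Polynomial ℂ) (P.coeff m)).natDegree
          + (∏ i ∈ m.support, c i ^ m i).natDegree := Polynomial.natDegree_mul_le
    _ ≤ 0 + ∑ i ∈ m.support, m i :=
        add_le_add (le_of_eq (Polynomial.natDegree_C _)) h2
    _ ≤ P.totalDegree := by rw [zero_add]; exact h3

private lemma aux_homComp_mul {σ : Type*} (c q : MvPolynomial σ ℂ) {e : ℕ}
    (hq : q.IsHomogeneous e) (m : ℕ) :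
    homogeneousComponent (m + e) (c * q) = homogeneousComponent m c * q := by
  classical
  set N := max c.totalDegree m with hN
  have hsub : Finset.range (c.totalDegree + 1) ⊆ Finset.range (N + 1) :=
    Finset.range_subset_range.2 (by omega)
  have hc : c = ∑ j ∈ Finset.range (N + 1), homogeneousComponent j c := by
    conv_lhs => rw [← sum_homogeneousComponent c]
    refine Finset.sum_subset hsub fun j _ hj => ?_
    refine homogeneousComponent_eq_zero _ c ?_
    simp only [Finset.mem_range, not_lt] at hj
    omega
  nth_rewrite 1 [hc]
  rw [Finset.sum_mul, map_sum]
  have key : ∀ j ∈ Finset.range (N + 1),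
      homogeneousComponent (m + e) (homogeneousComponent j c * q)
        = if j = m then homogeneousComponent j c * q else 0 := by
    intro j _
    have hmem : homogeneousComponent j c * q ∈ homogeneousSubmodule σ ℂ (j + e) :=
      (homogeneousComponent_isHomogeneous j c).mul hq
    rw [homogeneousComponent_of_mem hmem]
    by_cases hjm : j = m
    · subst hjm; simp
    · rw [if_neg (by omega), if_neg hjm]
  rw [Finset.sum_congr rfl key, Finset.sum_ite_eq' (Finset.range (N + 1)) m
      (fun j => homogeneousComponent j c * q), if_pos (by simp [hN])]

/-- Let `g₁, …, g_p` be forms of degree `d`.  (i) The image of the map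
`(f₁, …, f_p) ↦ Σ gᵢ^{k-1} fᵢ` (with the `fᵢ` forms of degree `d`) equals the span of
the tangent spaces `{gᵢ^{k-1}·f : f ∈ S^d}` at the points `gᵢ^k` of the variety of
`k`-th powers.  (ii) In particular, if the ideal generated by `g₁^{k-1}, …, g_p^{k-1}`
contains all forms of degree `kd`, then the set of sums of `p` `k`-th powers of
degree-`d` forms is Zariski dense in `S^{kd}`: every polynomial function on the
coefficients vanishing on all such sums vanishes on every form of degree `kd`. -/
theorem terracini_span_and_density (n k d p : ℕ) (hn : 1 ≤ n) (hk : 2 ≤ k) (hd : 1 ≤ d)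
    (g : Fin p → MvPolynomial (Fin (n + 1)) ℂ) (hg : ∀ i, (g i).IsHomogeneous d) :
    ({q : MvPolynomial (Fin (n + 1)) ℂ |
        ∃ f : Fin p → MvPolynomial (Fin (n + 1)) ℂ,
          (∀ i, (f i).IsHomogeneous d) ∧ q = ∑ i, g i ^ (k - 1) * f i} =
      ↑(⨆ i : Fin p, Submodule.map (LinearMap.mulLeft ℂ (g i ^ (k - 1)))
          (MvPolynomial.homogeneousSubmodule (Fin (n + 1)) ℂ d))) ∧
    ((∀ q : MvPolynomial (Fin (n + 1)) ℂ, q.IsHomogeneous (k * d) →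
        q ∈ Ideal.span (Set.range fun i : Fin p => g i ^ (k - 1))) →
      ∀ P : MvPolynomial ((Fin (n + 1)) →₀ ℕ) ℂ,
        (∀ h : Fin p → MvPolynomial (Fin (n + 1)) ℂ, (∀ i, (h i).IsHomogeneous d) →
          MvPolynomial.eval (∑ i, h i ^ k).coeff P = 0) →
        ∀ f : MvPolynomial (Fin (n + 1)) ℂ, f.IsHomogeneous (k * d) →
          MvPolynomial.eval f.coeff P = 0) := by
  constructor
  · -- part (i)
    ext q
    simp only [Set.mem_setOf_eq, SetLike.mem_coe]
    constructor
    · rintro ⟨f, hf, rfl⟩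
      refine Submodule.sum_mem _ fun i _ => Submodule.mem_iSup_of_mem i ?_
      exact Submodule.mem_map.2 ⟨f i, (mem_homogeneousSubmodule _ _).2 (hf i),
        LinearMap.mulLeft_apply _ _ _⟩
    · intro hq
      rw [Submodule.mem_iSup_iff_exists_finsupp] at hq
      obtain ⟨F, hF, hsum⟩ := hq
      choose h h1 h2 using fun i => Submodule.mem_map.1 (hF i)
      refine ⟨h, fun i => (mem_homogeneousSubmodule _ _).1 (h1 i), ?_⟩
      rw [← hsum, Finsupp.sum_fintype _ _ (fun _ => rfl)]
      exact (Finset.sum_congr rfl fun i _ => (h2 i).symm)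
  · -- part (ii)
    intro H P hP f hf
    have lsurj : ∀ w : MvPolynomial (Fin (n + 1)) ℂ, w.IsHomogeneous (k * d) →
        ∃ e : Fin p → MvPolynomial (Fin (n + 1)) ℂ,
          (∀ i, (e i).IsHomogeneous d) ∧ ∑ i, g i ^ (k - 1) * e i = w := by
      have hkd : (k - 1) * d + d = k * d := by
        have h1 : k - 1 + 1 = k := by omega
        calc (k - 1) * d + d = (k - 1 + 1) * d := by ring
          _ = k * d := by rw [h1]
      have hgp : ∀ i, (g i ^ (k - 1)).IsHomogeneous ((k - 1) * d) := fun i =>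
        mul_comm d (k - 1) ▸ (hg i).pow (k - 1)
      intro w hw
      have hw' := H w hw
      rw [Ideal.span, Submodule.mem_span_range_iff_exists_fun] at hw'
      obtain ⟨c, hc⟩ := hw'
      refine ⟨fun i => homogeneousComponent d (c i),
        fun i => homogeneousComponent_isHomogeneous d _, ?_⟩
      calc ∑ i, g i ^ (k - 1) * homogeneousComponent d (c i)
          = ∑ i, homogeneousComponent (k * d) (c i * g i ^ (k - 1)) := by
            refine Finset.sum_congr rfl fun i _ => ?_
            rw [show k * d = d + (k - 1) * d by omega, aux_homComp_mul (c i) _ (hgp i) d, mul_comm]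
        _ = homogeneousComponent (k * d) (∑ i, c i * g i ^ (k - 1)) := (map_sum _ _ _).symm
        _ = homogeneousComponent (k * d) w := by
            rw [show ∑ i, c i * g i ^ (k - 1) = w from by
              rw [← hc]; exact Finset.sum_congr rfl fun i _ => (smul_eq_mul _ _)]
        _ = w := by rw [homogeneousComponent_of_mem hw, if_pos rfl]
    have hk1 : 1 ≤ k := by omega
    set ψ : MvPolynomial (Fin (n + 1)) ℂ →+* MvPolynomial (Fin (n + 1)) (Polynomial ℂ) := MvPolynomial.map (Polynomial.C : ℂ →+* Polynomial ℂ) with hψ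
    set ε : MvPolynomial (Fin (n + 1)) (Polynomial ℂ) →+* MvPolynomial (Fin (n + 1)) ℂ := MvPolynomial.map (Polynomial.evalRingHom (0 : ℂ)) with hε
    set T : MvPolynomial (Fin (n + 1)) (Polynomial ℂ) := MvPolynomial.C Polynomial.X with hT
    set a : MvPolynomial (Fin (n + 1)) ℂ := ∑ i, g i ^ k with ha'
    set u : MvPolynomial (Fin (n + 1)) ℂ := f - a with hu'
    have ha : a.IsHomogeneous (k * d) :=
      IsHomogeneous.sum _ _ _ fun i _ => mul_comm d k ▸ (hg i).pow k
    have hu : u.IsHomogeneous (k * d) := (mem_homogeneousSubmodule _ _).1 (Submodule.sub_mem _ hf ha)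
    -- decomposition mod T
    have hdecomp : ∀ ρ : MvPolynomial (Fin (n + 1)) (Polynomial ℂ), ∃ ρ' : MvPolynomial (Fin (n + 1)) (Polynomial ℂ), ρ = ψ (ε ρ) + T * ρ' := by
      intro ρ
      have hdvd : T ∣ ρ - ψ (ε ρ) := by
        rw [hT, MvPolynomial.C_dvd_iff_dvd_coeff]
        intro μ
        rw [MvPolynomial.coeff_sub, hψ, hε, MvPolynomial.coeff_map, MvPolynomial.coeff_map,
          Polynomial.X_dvd_iff, Polynomial.coeff_sub, Polynomial.coeff_C]
        simp [Polynomial.coeff_zero_eq_eval_zero]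
      obtain ⟨ρ', hp⟩ := hdvd
      exact ⟨ρ', by rw [← hp]; ring⟩
    -- cancellation of powers of T for homogeneity
    have hcancel : ∀ (j : ℕ) (x ρ₂ : MvPolynomial (Fin (n + 1)) (Polynomial ℂ)), x.IsHomogeneous (k * d) → T ^ j * ρ₂ = x →
        ρ₂.IsHomogeneous (k * d) := by
      intro j x ρ₂ hx hEq μ hμ
      refine hx (d := μ) ?_
      rw [← hEq, show T ^ j = MvPolynomial.C (Polynomial.X ^ j) from by
        rw [hT, ← map_pow], MvPolynomial.coeff_C_mul]
      exact mul_ne_zero (pow_ne_zero _ Polynomial.X_ne_zero) hμ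
    have newton : ∀ m : ℕ, 1 ≤ m → ∃ (G : Fin p → MvPolynomial (Fin (n + 1)) (Polynomial ℂ)) (ρ : MvPolynomial (Fin (n + 1)) (Polynomial ℂ)),
        (∀ i, (G i).IsHomogeneous d) ∧ (∀ i, T ∣ (G i - ψ (g i))) ∧ ρ.IsHomogeneous (k * d) ∧
        ∑ i, G i ^ k = ψ a + T * ψ u - T ^ m * ρ := by
      intro m hm
      induction m, hm using Nat.le_induction with
      | base =>
        refine ⟨fun i => ψ (g i), ψ u, fun i => (hg i).map _, fun i => by simp, hu.map _, ?_⟩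
        have h1 : ∑ i, (ψ (g i)) ^ k = ψ a := by
          rw [ha', map_sum]
          exact Finset.sum_congr rfl fun i _ => (map_pow _ _ _).symm
        rw [h1, pow_one]; ring
      | succ m hm ih =>
        obtain ⟨G, ρ, hGhom, hGg, hρhom, heq⟩ := ih
        have hwhom : (ε ρ).IsHomogeneous (k * d) := hρhom.map _
        have hwk : (((k : ℂ))⁻¹ • ε ρ).IsHomogeneous (k * d) :=
          (homogeneousSubmodule _ _ _).smul_mem _ hwhom
        obtain ⟨e, hehom, heeq⟩ := lsurj _ hwk
        have hψw : (k : MvPolynomial (Fin (n + 1)) (Polynomial ℂ)) * ∑ i, (ψ (g i)) ^ (k - 1) * ψ (e i) = ψ (ε ρ) := by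
          have h1 : ∑ i, (ψ (g i)) ^ (k - 1) * ψ (e i) = ψ (∑ i, g i ^ (k - 1) * e i) := by
            rw [map_sum]
            exact Finset.sum_congr rfl fun i _ => by rw [map_mul, map_pow]
          rw [h1, heeq, show ((k : MvPolynomial (Fin (n + 1)) (Polynomial ℂ))) = ψ ((k : MvPolynomial (Fin (n + 1)) ℂ)) from (map_natCast ψ k).symm, ← map_mul]
          congr 1
          rw [show ((k : MvPolynomial (Fin (n + 1)) ℂ)) = MvPolynomial.C ((k : ℂ)) from (map_natCast (MvPolynomial.C : ℂ →+* MvPolynomial (Fin (n + 1)) ℂ) k).symm,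
            ← MvPolynomial.smul_eq_C_mul, smul_smul,
            mul_inv_cancel₀ (Nat.cast_ne_zero.2 (by omega)), one_smul]
        choose b hb using fun i =>
          (dvd_trans (hGg i) (sub_dvd_pow_sub_pow (G i) (ψ (g i)) (k - 1)))
        have hb' : ∀ i, G i ^ (k - 1) = (ψ (g i)) ^ (k - 1) + T * b i := fun i => by
          rw [← sub_eq_iff_eq_add']
          exact hb i
        choose z hz using fun i => aux_pow_expand (G i) (T ^ m * ψ (e i)) hk1
        obtain ⟨ρ', hρ'⟩ := hdecomp ρ
        have hG'hom : ∀ i, (G i + T ^ m * ψ (e i)).IsHomogeneous d := by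
          intro i
          refine (hGhom i).add ?_
          have h2 : (T ^ m * ψ (e i)).IsHomogeneous (0 + d) := by
            refine IsHomogeneous.mul ?_ ((hehom i).map _)
            rw [hT, ← map_pow]
            exact isHomogeneous_C _ _
          simpa using h2
        have hsum : ∑ i, (G i + T ^ m * ψ (e i)) ^ k = ψ a + T * ψ u - T ^ (m + 1) *
            (ρ' - (k : MvPolynomial (Fin (n + 1)) (Polynomial ℂ)) * ∑ i, b i * ψ (e i)
              - T ^ (m - 1) * ∑ i, (ψ (e i)) ^ 2 * z i) := by
          have hTT : T ^ m * T ^ m = T ^ (m + 1) * T ^ (m - 1) := by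
            rw [← pow_add, ← pow_add]; congr 1; omega
          have hmid : ∑ i, (k : MvPolynomial (Fin (n + 1)) (Polynomial ℂ)) * G i ^ (k - 1) * (T ^ m * ψ (e i))
              = T ^ m * ψ (ε ρ) + T ^ (m + 1) * ((k : MvPolynomial (Fin (n + 1)) (Polynomial ℂ)) * ∑ i, b i * ψ (e i)) := by
            have h1 : ∀ i ∈ Finset.univ, (k : MvPolynomial (Fin (n + 1)) (Polynomial ℂ)) * G i ^ (k - 1) * (T ^ m * ψ (e i))
                = T ^ m * ((k : MvPolynomial (Fin (n + 1)) (Polynomial ℂ)) * ((ψ (g i)) ^ (k - 1) * ψ (e i)))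
                  + T ^ (m + 1) * ((k : MvPolynomial (Fin (n + 1)) (Polynomial ℂ)) * (b i * ψ (e i))) := by
              intro i _
              rw [hb' i]; ring
            rw [Finset.sum_congr rfl h1, Finset.sum_add_distrib]
            congr 1
            · rw [← Finset.mul_sum, ← Finset.mul_sum, hψw]
            · rw [← Finset.mul_sum, ← Finset.mul_sum]
          have hthird : ∑ i, (T ^ m * ψ (e i)) ^ 2 * z i
              = T ^ (m + 1) * (T ^ (m - 1) * ∑ i, (ψ (e i)) ^ 2 * z i) := by
            rw [Finset.mul_sum, Finset.mul_sum]
            refine Finset.sum_congr rfl fun i _ => ?_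
            calc (T ^ m * ψ (e i)) ^ 2 * z i = (T ^ m * T ^ m) * ((ψ (e i)) ^ 2 * z i) := by ring
              _ = T ^ (m + 1) * (T ^ (m - 1) * ((ψ (e i)) ^ 2 * z i)) := by rw [hTT]; ring
          calc ∑ i, (G i + T ^ m * ψ (e i)) ^ k
              = ∑ i, (G i ^ k + (k : MvPolynomial (Fin (n + 1)) (Polynomial ℂ)) * G i ^ (k - 1) * (T ^ m * ψ (e i))
                  + (T ^ m * ψ (e i)) ^ 2 * z i) := Finset.sum_congr rfl fun i _ => hz i
            _ = ∑ i, G i ^ k + ∑ i, (k : MvPolynomial (Fin (n + 1)) (Polynomial ℂ)) * G i ^ (k - 1) * (T ^ m * ψ (e i))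
                  + ∑ i, (T ^ m * ψ (e i)) ^ 2 * z i := by
                rw [Finset.sum_add_distrib, Finset.sum_add_distrib]
            _ = _ := by
                rw [heq, hmid, hthird]
                linear_combination (-(T ^ m)) * hρ'
        refine ⟨fun i => G i + T ^ m * ψ (e i),
          ρ' - (k : MvPolynomial (Fin (n + 1)) (Polynomial ℂ)) * ∑ i, b i * ψ (e i)
            - T ^ (m - 1) * ∑ i, (ψ (e i)) ^ 2 * z i,
          hG'hom, ?_, ?_, hsum⟩
        · intro i
          have h3 : G i + T ^ m * ψ (e i) - ψ (g i) = (G i - ψ (g i)) + T ^ m * ψ (e i) := by ring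
          rw [h3]
          exact dvd_add (hGg i) (Dvd.dvd.mul_right (dvd_pow_self T (by omega)) _)
        · refine hcancel (m + 1) (ψ a + T * ψ u - ∑ i, (G i + T ^ m * ψ (e i)) ^ k) _ ?_ ?_
          · have h1 : (ψ a).IsHomogeneous (k * d) := ha.map _
            have h2 : (T * ψ u).IsHomogeneous (0 + k * d) := by
              refine IsHomogeneous.mul ?_ (hu.map _)
              rw [hT]
              exact isHomogeneous_C _ _
            have h3 : (∑ i, (G i + T ^ m * ψ (e i)) ^ k).IsHomogeneous (k * d) :=
              IsHomogeneous.sum _ _ _ fun i _ => mul_comm d k ▸ (hG'hom i).pow k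
            rw [zero_add] at h2
            exact (mem_homogeneousSubmodule _ _).1
              (Submodule.sub_mem _ (Submodule.add_mem _ h1 h2) h3)
          · rw [hsum]; ring
    obtain ⟨G, ρ, hGhom, -, -, heq⟩ := newton (P.totalDegree + 1) (by omega)
    set M := P.totalDegree + 1 with hM
    set Sig := ∑ i, G i ^ k with hSig
    set Q : Polynomial ℂ := MvPolynomial.aeval (fun μ => MvPolynomial.coeff μ Sig) P with hQ
    -- commuting evaluation with aeval
    have haux : ∀ (φ : Polynomial ℂ →ₐ[ℂ] ℂ) (c : ((Fin (n + 1)) →₀ ℕ) → Polynomial ℂ),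
        φ (MvPolynomial.aeval c P) = MvPolynomial.eval (fun μ => φ (c μ)) P := by
      intro φ c
      rw [MvPolynomial.comp_aeval_apply]
      rw [MvPolynomial.aeval_def, Algebra.algebraMap_self, MvPolynomial.eval₂_id]
    -- claim 1 : Q = 0
    have hQ0 : Q = 0 := by
      refine Polynomial.funext fun t => ?_
      rw [Polynomial.eval_zero]
      have hcomm : Polynomial.eval t Q
          = MvPolynomial.eval (fun μ => Polynomial.eval t (MvPolynomial.coeff μ Sig)) P := by
        rw [hQ, ← congrFun (Polynomial.coe_aeval_eq_eval t) _]
        rw [haux (Polynomial.aeval t) _]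
        exact congrArg (fun c => MvPolynomial.eval c P)
          (funext fun μ => congrFun (Polynomial.coe_aeval_eq_eval t) _)
      have hcoeff : (∑ i, (MvPolynomial.map (Polynomial.evalRingHom t) (G i)) ^ k).coeff
          = fun μ => Polynomial.eval t (MvPolynomial.coeff μ Sig) := by
        funext μ
        have h5 : ∑ i, (MvPolynomial.map (Polynomial.evalRingHom t) (G i)) ^ k
            = MvPolynomial.map (Polynomial.evalRingHom t) Sig := by
          rw [hSig, map_sum (MvPolynomial.map (Polynomial.evalRingHom t))]
          exact Finset.sum_congr rfl fun i _ => (map_pow _ _ _).symm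
        rw [h5, MvPolynomial.coeff_map]
        rfl
      rw [hcomm, ← hcoeff]
      exact hP _ (fun i => (hGhom i).map _)
    set s : ((Fin (n + 1)) →₀ ℕ) → Polynomial ℂ :=
      fun μ => Polynomial.C (a.coeff μ) + Polynomial.X * Polynomial.C (u.coeff μ) with hs
    set S : Polynomial ℂ := MvPolynomial.aeval s P with hS
    -- claim 3 : X^M ∣ S
    have hdvd : (Polynomial.X : Polynomial ℂ) ^ M ∣ S := by
      have hcong : ∀ μ, MvPolynomial.coeff μ Sig - s μ
          = -(Polynomial.X ^ M * MvPolynomial.coeff μ ρ) := by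
        intro μ
        rw [heq, MvPolynomial.coeff_sub, MvPolynomial.coeff_add, hs]
        rw [MvPolynomial.coeff_C_mul, show (MvPolynomial.C Polynomial.X : MvPolynomial (Fin (n+1)) (Polynomial ℂ)) ^ M = MvPolynomial.C (Polynomial.X ^ M) from by rw [map_pow], MvPolynomial.coeff_C_mul]
        rw [hψ, MvPolynomial.coeff_map, MvPolynomial.coeff_map]
        ring
      set I := Ideal.span {(Polynomial.X : Polynomial ℂ) ^ M} with hI
      have hπ : ∀ μ, Ideal.Quotient.mk I (MvPolynomial.coeff μ Sig) = Ideal.Quotient.mk I (s μ) := by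
        intro μ
        rw [Ideal.Quotient.eq, hcong μ]
        exact neg_mem (Ideal.mem_span_singleton.2 ⟨_, rfl⟩)
      have h1 : Ideal.Quotient.mk I S = Ideal.Quotient.mk I Q := by
        have h7 : (fun μ => Ideal.Quotient.mk I (s μ))
            = fun μ => Ideal.Quotient.mk I (MvPolynomial.coeff μ Sig) :=
          funext fun μ => (hπ μ).symm
        rw [hS, hQ, MvPolynomial.map_aeval, MvPolynomial.map_aeval, h7]
      rw [hQ0, map_zero] at h1
      exact Ideal.mem_span_singleton.1 (Ideal.Quotient.eq_zero_iff_mem.1 h1)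
    -- claim 4 : S = 0
    have hSdeg : S.natDegree ≤ P.totalDegree := by
      refine aux_natDegree_aeval_le P s fun μ => ?_
      rw [hs]
      refine (Polynomial.natDegree_add_le _ _).trans ?_
      simp only [Polynomial.natDegree_C]
      refine max_le (by omega) ((Polynomial.natDegree_mul_le).trans ?_)
      simp [Polynomial.natDegree_X, Polynomial.natDegree_C]
    have hS0 : S = 0 := by
      by_contra h0
      have h2 := Polynomial.natDegree_le_of_dvd hdvd h0
      rw [Polynomial.natDegree_X_pow] at h2
      omega
    -- eval at 1
    have hfinal : MvPolynomial.eval f.coeff P = Polynomial.eval 1 S := by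
      rw [hS, ← congrFun (Polynomial.coe_aeval_eq_eval (1 : ℂ)) _, haux (Polynomial.aeval (1 : ℂ)) s]
      have h6 : (fun μ => Polynomial.aeval (1 : ℂ) (s μ)) = f.coeff := by
        funext μ
        rw [hs]
        simp only [map_add, map_mul, Polynomial.aeval_C, Polynomial.aeval_X,
          Algebra.algebraMap_self, RingHom.id_apply, one_mul]
        rw [hu', MvPolynomial.coeff_sub]
        ring
      rw [h6]
    rw [hfinal, hS0, Polynomial.eval_zero]
end
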